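/- Let a, b, c, d be integers with a² + b² + c² = 3d², d odd, gcd(a,b,c) = 1, and set q := a² + b², A := ac, B := bd. Then there exist integers r, s, u, v such that 2q = s² + 3r², As − 3Br = 2qu, and Ar + Bs = −2qv. -/

import Mathlib

private lemma p4 (A B : ℤ) (hA : A % 2 = 1) (hB : B % 2 = 1) :
    ∃ s r u v : ℤ, (4:ℤ) = s^2+3*r^2 ∧ A*s - 3*B*r = 4*u ∧ A*r + B*s = 4*v := by
  rcases (by omega : (A - B) % 4 = 0 ∨ (A + B) % 4 = 0) with h | h
  · exact ⟨-1, 1, -((A+3*B)/4), (A-B)/4, by norm_num, by omega, by omega⟩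
  · exact ⟨1, 1, (A-3*B)/4, (A+B)/4, by norm_num, by omega, by omega⟩

private lemma comp {A B m k s₁ r₁ u₁ v₁ s₂ r₂ u v : ℤ}
    (h1 : m = s₁^2+3*r₁^2) (h2 : A*s₁ - 3*B*r₁ = m*u₁) (h3 : A*r₁ + B*s₁ = m*v₁)
    (h4 : k = s₂^2+3*r₂^2) (h5 : u₁*s₂ - 3*v₁*r₂ = k*u) (h6 : u₁*r₂ + v₁*s₂ = k*v) :
    m*k = (s₁*s₂-3*r₁*r₂)^2 + 3*(s₁*r₂+r₁*s₂)^2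
      ∧ A*(s₁*s₂-3*r₁*r₂) - 3*B*(s₁*r₂+r₁*s₂) = (m*k)*u
      ∧ A*(s₁*r₂+r₁*s₂) + B*(s₁*s₂-3*r₁*r₂) = (m*k)*v := by
  refine ⟨?_, ?_, ?_⟩
  · linear_combination k*h1 + (s₁^2+3*r₁^2)*h4
  · linear_combination s₂*h2 - 3*r₂*h3 + m*h5
  · linear_combination r₂*h2 + s₂*h3 + m*h6

private lemma extract (p m x s r u v : ℤ) (hm : m ≠ 0) (hpm : x^2+3 = p*m)
    (h1 : m = s^2+3*r^2) (h2 : x*s - 3*r = m*u) (h3 : x*r + s = m*v) :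
    p = u^2+3*v^2 := by
  have key : m^2 * p = m^2 * (u^2+3*v^2) := by
    linear_combination (-m)*hpm + (x^2+3)*h1 + (x*s-3*r+m*u)*h2 + 3*(x*r+s+m*v)*h3
  exact mul_left_cancel₀ (pow_ne_zero 2 hm) key

private lemma key3' (p : ℕ) (pp : p.Prime) (h2 : p ≠ 2) (h3 : p ≠ 3)
    (hs : IsSquare (-3 : ZMod p)) : p % 3 = 1 := by
  haveI : Fact p.Prime := ⟨pp⟩
  obtain ⟨x, hx⟩ := hs
  have hx2 : x^2 = -3 := by rw [pow_two]; exact hx.symm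
  have h2' : (2 : ZMod p) ≠ 0 := by
    have := (ZMod.natCast_eq_zero_iff 2 p)
    intro h
    have : p ∣ 2 := by
      apply (ZMod.natCast_eq_zero_iff 2 p).mp
      exact_mod_cast h
    exact h2 ((Nat.prime_dvd_prime_iff_eq pp Nat.prime_two).mp this)
  set z : ZMod p := (x - 1) / 2 with hzdef
  have h2z : 2 * z = x - 1 := by
    rw [hzdef]; field_simp
  have h4ne : (4 : ZMod p) ≠ 0 := by
    have : (4 : ZMod p) = 2 * 2 := by norm_num
    rw [this]; exact mul_ne_zero h2' h2'
  have h4z : (4 : ZMod p) * (z^2 + z + 1) = 0 := by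
    have e : (4 : ZMod p) * (z^2+z+1) = (2*z)^2 + 2*(2*z) + 4 := by ring
    rw [e, h2z]
    linear_combination hx2
  have hz : z^2 + z + 1 = 0 := by
    rcases mul_eq_zero.mp h4z with h | h
    · exact absurd h h4ne
    · exact h
  have hz3 : z^3 = 1 := by linear_combination (z - 1) * hz
  have hz1 : z ≠ 1 := by
    intro h
    rw [h] at hz
    have h30 : (3 : ZMod p) = 0 := by linear_combination hz
    have : p ∣ 3 := by
      apply (ZMod.natCast_eq_zero_iff 3 p).mp
      exact_mod_cast h30
    exact h3 ((Nat.prime_dvd_prime_iff_eq pp Nat.prime_three).mp this)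
  have hzu : IsUnit z := IsUnit.of_mul_eq_one (z^2) (by linear_combination hz3)
  set w : (ZMod p)ˣ := hzu.unit with hw
  have hwv : (w : ZMod p) = z := hzu.unit_spec
  have hw3 : w^3 = 1 := by
    ext
    push_cast [hwv]
    exact hz3
  have hw1 : w ≠ 1 := by
    intro h
    apply hz1
    rw [← hwv, h]; rfl
  have hord : orderOf w = 3 := by
    have hdvd : orderOf w ∣ 3 := orderOf_dvd_of_pow_eq_one hw3
    rcases (Nat.Prime.eq_one_or_self_of_dvd Nat.prime_three _ hdvd) with h | h
    · exact absurd (orderOf_eq_one_iff.mp h) hw1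
    · exact h
  have hcard : orderOf w ∣ Fintype.card (ZMod p)ˣ := orderOf_dvd_card
  rw [hord, ZMod.card_units] at hcard
  have := pp.two_le
  omega

private lemma key3 (p : ℕ) (pp : p.Prime) (h2 : p ≠ 2) (h3 : p ≠ 3) (u v : ℤ)
    (hdvd : (p:ℤ) ∣ u^2 + 3*v^2) (hv : ¬ (p:ℤ) ∣ v) : p % 3 = 1 := by
  haveI : Fact p.Prime := ⟨pp⟩
  have hU : ((u:ZMod p))^2 + 3*((v:ZMod p))^2 = 0 := by
    have h0 : ((u^2 + 3*v^2 : ℤ) : ZMod p) = 0 := by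
      rw [ZMod.intCast_zmod_eq_zero_iff_dvd]; exact hdvd
    push_cast at h0
    linear_combination h0
  have hV : (v : ZMod p) ≠ 0 := fun h => hv ((ZMod.intCast_zmod_eq_zero_iff_dvd v p).mp h)
  apply key3' p pp h2 h3
  refine ⟨(u:ZMod p) / (v:ZMod p), ?_⟩
  have h1 : (v:ZMod p) * (v:ZMod p)⁻¹ = 1 := mul_inv_cancel₀ hV
  have hu2 : (u:ZMod p)^2 = -3*(v:ZMod p)^2 := by linear_combination hU
  field_simp
  linear_combination -hu2

private lemma exists_sq_neg_three (p : ℕ) (pp : p.Prime) (hp3 : p % 3 = 1) :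
    ∃ x : ZMod p, x^2 = -3 := by
  haveI : Fact p.Prime := ⟨pp⟩
  have hp7 : 7 ≤ p := by
    by_contra h
    push_neg at h
    have h2 := pp.two_le
    interval_cases p <;> revert pp hp3 <;> decide
  obtain ⟨g, hg⟩ := IsCyclic.exists_generator (α := (ZMod p)ˣ)
  have horder : orderOf g = p - 1 := by
    rw [orderOf_eq_card_of_forall_mem_zpowers hg, Nat.card_eq_fintype_card, ZMod.card_units]
  set t := (p-1)/3 with ht
  have h3t : 3 * t = p - 1 := by omega
  have htpos : 0 < t := by omega
  set z := g ^ t with hz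
  have hz3 : z^3 = 1 := by
    rw [hz, ← pow_mul, mul_comm, h3t, ← ZMod.card_units p, pow_card_eq_one]
  have hz1 : z ≠ 1 := by
    intro h
    have := orderOf_dvd_of_pow_eq_one (n := t) (by rw [← hz, h])
    rw [horder] at this
    have := Nat.le_of_dvd htpos this
    omega
  set ζ : ZMod p := (z : ZMod p) with hζ
  have hζ3 : ζ^3 = 1 := by
    rw [hζ, ← Units.val_pow_eq_pow_val, hz3, Units.val_one]
  have hζ1 : ζ ≠ 1 := by
    intro h
    exact hz1 (Units.ext (by rw [← hζ, h, Units.val_one]))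
  have hquad : ζ^2 + ζ + 1 = 0 := by
    have h0 : (ζ - 1) * (ζ^2 + ζ + 1) = 0 := by linear_combination hζ3
    rcases mul_eq_zero.mp h0 with h | h
    · exact absurd (sub_eq_zero.mp h) hζ1
    · exact h
  exact ⟨2*ζ+1, by linear_combination 4*hquad⟩

private lemma fact_split {p n n' : ℕ} (pp : p.Prime) (hn' : n = p^2 * n') (hn'0 : n' ≠ 0) :
    n.factorization p = n'.factorization p + 2 ∧
    ∀ q : ℕ, q ≠ p → n.factorization q = n'.factorization q := by
  have hp0 : (p:ℕ)^2 ≠ 0 := pow_ne_zero 2 pp.pos.ne'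
  constructor
  · rw [hn', Nat.factorization_mul hp0 hn'0, Finsupp.add_apply, pp.factorization_pow,
      Finsupp.single_eq_same]
    omega
  · intro q hq
    rw [hn', Nat.factorization_mul hp0 hn'0, Finsupp.add_apply, pp.factorization_pow,
      Finsupp.single_eq_of_ne' (by exact fun h => hq h.symm)]
    omega

private lemma sub_lt_self' {p n n' : ℕ} (pp : p.Prime) (hn' : n = p^2 * n') (hn'0 : n' ≠ 0) :
    n' < n := by
  have h2 := pp.two_le
  have h4 : 4 ≤ p^2 := by nlinarith
  have h1 : n' < 4 * n' := by omega
  have h2' : 4 * n' ≤ p^2 * n' := Nat.mul_le_mul_right _ h4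
  omega

private def Vc (n : ℕ) (A B : ℤ) : Prop :=
  ∀ p : ℕ, p.Prime → p % 3 ≠ 1 → Even (n.factorization p) ∧
    (p:ℤ)^(n.factorization p / 2) ∣ A ∧ (p:ℤ)^(n.factorization p / 2) ∣ B

private lemma not_dvd_one_int {p : ℕ} (pp : p.Prime) : ¬ ((p:ℤ) ∣ 1) := by
  intro h
  have h1 := Int.le_of_dvd one_pos h
  have h2 : (2:ℤ) ≤ (p:ℕ) := by exact_mod_cast pp.two_le
  omega

private lemma triv_Vc {m : ℕ} {A B : ℤ} (h : ∀ q : ℕ, q.Prime → q % 3 ≠ 1 → ¬ q ∣ m) :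
    Vc m A B := by
  intro q qq hq3
  rw [Nat.factorization_eq_zero_of_not_dvd (h q qq hq3)]
  simp

private lemma L1 (p : ℕ) (pp : p.Prime) (hp4 : p % 4 = 3) :
    ∀ n : ℕ, ∀ a b : ℤ, (n:ℤ) = a^2 + b^2 →
      Even (n.factorization p) ∧ (p:ℤ)^(n.factorization p / 2) ∣ a ∧
        (p:ℤ)^(n.factorization p / 2) ∣ b := by
  intro n
  induction n using Nat.strong_induction_on with
  | _ n ih =>
    intro a b hn
    rcases eq_or_ne n 0 with rfl | hn0
    · simp
    by_cases hpn : p ∣ n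
    case neg =>
      rw [Nat.factorization_eq_zero_of_not_dvd hpn]
      simp
    case pos =>
      haveI : Fact p.Prime := ⟨pp⟩
      have pInt : Prime (p:ℤ) := Nat.prime_iff_prime_int.mp pp
      have hpz : (p:ℤ) ∣ a^2+b^2 := hn ▸ Int.natCast_dvd_natCast.mpr hpn
      have hb : (p:ℤ) ∣ b := by
        by_contra hb
        have hbz : ((b:ZMod p)) ≠ 0 := fun h => hb ((ZMod.intCast_zmod_eq_zero_iff_dvd b p).mp h)
        have h0 : ((a:ZMod p))^2 = -((b:ZMod p))^2 := by
          have h0' : ((a^2 + b^2 : ℤ) : ZMod p) = 0 := by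
            rw [ZMod.intCast_zmod_eq_zero_iff_dvd]; exact hpz
          push_cast at h0'
          linear_combination h0'
        exact (ZMod.mod_four_ne_three_of_sq_eq_neg_sq' hbz h0) hp4
      have ha : (p:ℤ) ∣ a := by
        have h2 : (p:ℤ) ∣ a^2 := by
          have e : a^2 = (a^2+b^2) - b*b := by ring
          rw [e]
          exact dvd_sub hpz (hb.mul_left b)
        exact pInt.dvd_of_dvd_pow h2
      obtain ⟨a', rfl⟩ := ha
      obtain ⟨b', rfl⟩ := hb
      have hp2n : (p^2 : ℕ) ∣ n := by
        have h2 : ((p^2:ℕ):ℤ) ∣ (n:ℤ) := by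
          push_cast
          exact ⟨a'^2+b'^2, by linear_combination hn⟩
        exact_mod_cast h2
      set n' := n / p^2 with hn'def
      have hn' : n = p^2 * n' := (Nat.mul_div_cancel' hp2n).symm
      have hn'0 : n' ≠ 0 := by
        intro h; rw [h, mul_zero] at hn'; exact hn0 hn'
      have hc : (n':ℤ) = a'^2 + b'^2 := by
        have h1 : ((p:ℤ)^2) * (n':ℤ) = ((p:ℤ)^2) * (a'^2+b'^2) := by
          have hcast : (n:ℤ) = (p:ℤ)^2 * (n':ℤ) := by exact_mod_cast congrArg (Nat.cast : ℕ → ℤ) hn'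
          rw [← hcast]
          linear_combination hn
        exact mul_left_cancel₀ (pow_ne_zero 2 (by exact_mod_cast pp.pos.ne')) h1
      obtain ⟨hev, hda, hdb⟩ := ih n' (sub_lt_self' pp hn' hn'0) a' b' hc
      obtain ⟨hfp, _⟩ := fact_split pp hn' hn'0
      rw [hfp]
      have hdiv : (n'.factorization p + 2)/2 = n'.factorization p / 2 + 1 := by omega
      refine ⟨by rcases hev with ⟨k, hk⟩; exact ⟨k+1, by omega⟩, ?_, ?_⟩
      · rw [hdiv, pow_succ']
        exact mul_dvd_mul dvd_rfl hda
      · rw [hdiv, pow_succ']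
        exact mul_dvd_mul dvd_rfl hdb

private lemma L2 (p : ℕ) (pp : p.Prime) (hp2 : p ≠ 2) (hp3 : p ≠ 3) (hp4 : p % 4 = 1)
    (hpm3 : p % 3 ≠ 1) :
    ∀ n : ℕ, ∀ c d : ℤ, (n:ℤ) = 3*d^2 - c^2 →
      Even (n.factorization p) ∧ (p:ℤ)^(n.factorization p / 2) ∣ c ∧
        (p:ℤ)^(n.factorization p / 2) ∣ d := by
  intro n
  induction n using Nat.strong_induction_on with
  | _ n ih =>
    intro c d hn
    rcases eq_or_ne n 0 with rfl | hn0
    · simp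
    by_cases hpn : p ∣ n
    case neg =>
      rw [Nat.factorization_eq_zero_of_not_dvd hpn]
      simp
    case pos =>
      haveI : Fact p.Prime := ⟨pp⟩
      have pInt : Prime (p:ℤ) := Nat.prime_iff_prime_int.mp pp
      have hpz : (p:ℤ) ∣ 3*d^2 - c^2 := hn ▸ Int.natCast_dvd_natCast.mpr hpn
      have hd : (p:ℤ) ∣ d := by
        by_contra hd
        have hdz : ((d:ZMod p)) ≠ 0 := fun h => hd ((ZMod.intCast_zmod_eq_zero_iff_dvd d p).mp h)
        have h0 : ((c:ZMod p))^2 = 3*((d:ZMod p))^2 := by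
          have h0' : ((3*d^2 - c^2 : ℤ) : ZMod p) = 0 := by
            rw [ZMod.intCast_zmod_eq_zero_iff_dvd]; exact hpz
          push_cast at h0'
          linear_combination -h0'
        have hsq3 : IsSquare (3 : ZMod p) := by
          refine ⟨(c:ZMod p) / (d:ZMod p), ?_⟩
          have h1 : (d:ZMod p) * (d:ZMod p)⁻¹ = 1 := mul_inv_cancel₀ hdz
          field_simp
          linear_combination -h0
        have hsqm1 : IsSquare (-1 : ZMod p) :=
          (ZMod.exists_sq_eq_neg_one_iff (p := p)).mpr (by omega)
        have hsqm3 : IsSquare (-3 : ZMod p) := by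
          have := hsqm1.mul hsq3
          simpa using this
        exact hpm3 (key3' p pp hp2 hp3 hsqm3)
      have hc : (p:ℤ) ∣ c := by
        have h2 : (p:ℤ) ∣ c^2 := by
          have e : c^2 = 3*(d*d) - (3*d^2 - c^2) := by ring
          rw [e]
          exact dvd_sub ((hd.mul_left d).mul_left 3) hpz
        exact pInt.dvd_of_dvd_pow h2
      obtain ⟨c', rfl⟩ := hc
      obtain ⟨d', rfl⟩ := hd
      have hp2n : (p^2 : ℕ) ∣ n := by
        have h2 : ((p^2:ℕ):ℤ) ∣ (n:ℤ) := by
          push_cast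
          exact ⟨3*d'^2 - c'^2, by linear_combination hn⟩
        exact_mod_cast h2
      set n' := n / p^2 with hn'def
      have hn' : n = p^2 * n' := (Nat.mul_div_cancel' hp2n).symm
      have hn'0 : n' ≠ 0 := by
        intro h; rw [h, mul_zero] at hn'; exact hn0 hn'
      have hcc : (n':ℤ) = 3*d'^2 - c'^2 := by
        have h1 : ((p:ℤ)^2) * (n':ℤ) = ((p:ℤ)^2) * (3*d'^2 - c'^2) := by
          have hcast : (n:ℤ) = (p:ℤ)^2 * (n':ℤ) := by exact_mod_cast congrArg (Nat.cast : ℕ → ℤ) hn'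
          rw [← hcast]
          linear_combination hn
        exact mul_left_cancel₀ (pow_ne_zero 2 (by exact_mod_cast pp.pos.ne')) h1
      obtain ⟨hev, hdc, hdd⟩ := ih n' (sub_lt_self' pp hn' hn'0) c' d' hcc
      obtain ⟨hfp, _⟩ := fact_split pp hn' hn'0
      rw [hfp]
      have hdiv : (n'.factorization p + 2)/2 = n'.factorization p / 2 + 1 := by omega
      refine ⟨by rcases hev with ⟨k, hk⟩; exact ⟨k+1, by omega⟩, ?_, ?_⟩
      · rw [hdiv, pow_succ']
        exact mul_dvd_mul dvd_rfl hdc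
      · rw [hdiv, pow_succ']
        exact mul_dvd_mul dvd_rfl hdd

private lemma rep (p : ℕ) (pp : p.Prime) (hp3 : p % 3 = 1)
    (ihc : ∀ m : ℕ, m < p → ∀ A B : ℤ, m % 2 = 1 → ¬ (3 ∣ m) → (m:ℤ) ∣ A^2+3*B^2 → Vc m A B →
      ∃ s r u v : ℤ, (m:ℤ) = s^2+3*r^2 ∧ A*s - 3*B*r = (m:ℤ)*u ∧ A*r + B*s = (m:ℤ)*v) :
    ∃ S R : ℤ, (p:ℤ) = S^2 + 3*R^2 := by
  haveI : Fact p.Prime := ⟨pp⟩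
  have hp2 : p ≠ 2 := by omega
  have hp3' : p ≠ 3 := by omega
  have hp7 : 7 ≤ p := by
    have h2 := pp.two_le
    by_contra h
    push_neg at h
    interval_cases p <;> first | omega | (exact absurd pp (by decide))
  have hpodd : p % 2 = 1 := pp.eq_two_or_odd.resolve_left hp2
  obtain ⟨x0, hx0⟩ := exists_sq_neg_three p pp hp3
  set X := x0.val with hXdef
  have hXlt : X < p := x0.val_lt
  have hXcast : ((X:ℕ) : ZMod p) = x0 := by rw [ZMod.natCast_val, ZMod.cast_id]
  have hX0 : X ≠ 0 := by
    intro h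
    have hx00 : x0 = 0 := by rw [← hXcast, h]; simp
    rw [hx00] at hx0
    have h30 : ((3:ℕ) : ZMod p) = 0 := by push_cast; linear_combination hx0
    have := Nat.le_of_dvd (by norm_num) ((ZMod.natCast_eq_zero_iff 3 p).mp h30)
    omega
  set x : ℕ := if 3 ∣ X then p - X else X with hxdef
  have hx3 : ¬ 3 ∣ x := by
    rw [hxdef]; split_ifs with h
    · omega
    · exact h
  have hxlt : x ≤ p - 1 := by rw [hxdef]; split_ifs <;> omega
  have hxcast : ((x:ℕ) : ZMod p)^2 = -3 := by
    rw [hxdef]; split_ifs with h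
    · rw [Nat.cast_sub (le_of_lt hXlt), ZMod.natCast_self, zero_sub, hXcast, neg_sq]
      exact hx0
    · rw [hXcast]; exact hx0
  have hdvd : p ∣ x^2 + 3 := by
    apply (ZMod.natCast_eq_zero_iff _ p).mp
    push_cast
    linear_combination hxcast
  obtain ⟨m, hm⟩ : ∃ m, x^2 + 3 = p * m := ⟨(x^2+3)/p, (Nat.mul_div_cancel' hdvd).symm⟩
  have hm0 : m ≠ 0 := by intro h; rw [h, mul_zero] at hm; omega
  have hmlt : m < p := by
    have hxb : x^2 ≤ (p-1)^2 := Nat.pow_le_pow_left hxlt 2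
    by_contra hcon
    push_neg at hcon
    have h1 : p * p ≤ p * m := Nat.mul_le_mul_left _ hcon
    obtain ⟨k, hk⟩ : ∃ k, p = k + 1 := ⟨p - 1, by omega⟩
    subst hk
    simp only [Nat.add_sub_cancel] at hxb
    nlinarith [hm, hxb, h1]
  have h3m : ¬ 3 ∣ m := by
    intro h3m
    have hd3 : (3:ℕ) ∣ x^2 + 3 := hm ▸ Dvd.dvd.mul_left h3m p
    have hd3' : (3:ℕ) ∣ x^2 := by omega
    exact hx3 (Nat.Prime.dvd_of_dvd_pow Nat.prime_three hd3')
  have hmZ : ((x:ℕ):ℤ)^2 + 3 = (p:ℤ)*(m:ℤ) := by exact_mod_cast congrArg (Nat.cast : ℕ → ℤ) hm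
  -- we will show P(m, x, 1) (possibly via 4*m₁ decomposition)
  suffices hPm : ∃ s r u v : ℤ, (m:ℤ) = s^2+3*r^2 ∧ ((x:ℕ):ℤ)*s - 3*r = (m:ℤ)*u ∧ ((x:ℕ):ℤ)*r + s = (m:ℤ)*v by
    obtain ⟨s, r, u, v, h1, h2, h3⟩ := hPm
    exact ⟨u, v, extract (p:ℤ) (m:ℤ) ((x:ℕ):ℤ) s r u v (by exact_mod_cast hm0) hmZ h1 h2 h3⟩
  rcases Nat.even_or_odd x with hxev | hxodd
  · -- x even, m odd
    have hxsqev : Even (x^2) := (Nat.even_pow (n := 2)).mpr ⟨hxev, by norm_num⟩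
    have hmsodd : Odd (x^2+3) := Even.add_odd hxsqev ⟨1, by norm_num⟩
    have hmodd : m % 2 = 1 := by
      rw [hm] at hmsodd
      exact Nat.odd_iff.mp ((Nat.odd_mul.mp hmsodd).2)
    have hdvd1 : (m:ℤ) ∣ ((x:ℕ):ℤ)^2 + 3*1^2 := ⟨(p:ℤ), by linarith [hmZ]⟩
    have hVm : Vc m ((x:ℕ):ℤ) 1 := by
      apply triv_Vc
      intro q qq hq3 hqm
      have hq2 : q ≠ 2 := by
        intro h; subst h
        omega
      have hq3' : q ≠ 3 := fun h => h3m (h ▸ hqm)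
      apply hq3
      apply key3 q qq hq2 hq3' ((x:ℕ):ℤ) 1 _ (not_dvd_one_int qq)
      have : (q:ℕ) ∣ x^2+3 := hqm.trans ⟨p, by rw [hm, Nat.mul_comm]⟩
      have hz : ((q:ℕ):ℤ) ∣ ((x^2+3 : ℕ):ℤ) := Int.natCast_dvd_natCast.mpr this
      push_cast at hz
      have e : ((x:ℕ):ℤ)^2+3*1^2 = ((x:ℕ):ℤ)^2+3 := by ring
      rw [e]
      exact hz
    obtain ⟨s, r, u, v, h1, h2, h3⟩ := ihc m hmlt ((x:ℕ):ℤ) 1 hmodd h3m hdvd1 hVm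
    exact ⟨s, r, u, v, h1, by linear_combination h2, by linear_combination h3⟩
  · -- x odd
    obtain ⟨t, ht⟩ := hxodd
    have hx4 : x^2 + 3 = 4*(t^2+t+1) := by rw [ht]; ring
    have h4pm : 4 ∣ p * m := by rw [← hm, hx4]; exact ⟨t^2+t+1, rfl⟩
    have hcop4 : Nat.Coprime 4 p := by
      have hc2 : Nat.Coprime 2 p := (Nat.coprime_primes Nat.prime_two pp).mpr (fun h => hp2 h.symm)
      have := hc2.pow_left 2
      norm_num at this
      exact this
    have h4m : 4 ∣ m := (Nat.Coprime.dvd_of_dvd_mul_left hcop4 h4pm)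
    obtain ⟨m₁, hm₁⟩ := h4m
    have hpm₁ : p * m₁ = t^2+t+1 := by
      have : 4*(p*m₁) = 4*(t^2+t+1) := by rw [← hx4, hm, hm₁]; ring
      omega
    have httodd : Odd (t^2+t+1) := by
      have : Even (t^2+t) := by
        have := Nat.even_mul_succ_self t
        have e : t*(t+1) = t^2+t := by ring
        rwa [e] at this
      exact Even.add_one this
    have hm₁odd : m₁ % 2 = 1 := by
      rw [← hpm₁] at httodd
      exact Nat.odd_iff.mp ((Nat.odd_mul.mp httodd).2)
    have hm₁lt : m₁ < p := by omega
    have h3m₁ : ¬ 3 ∣ m₁ := fun h => h3m (hm₁ ▸ Dvd.dvd.mul_left h 4)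
    have hm₁0 : m₁ ≠ 0 := by omega
    have hxZodd : ((x:ℕ):ℤ) % 2 = 1 := by
      have : (x:ℕ) % 2 = 1 := by omega
      omega
    obtain ⟨s₄, r₄, u₄, v₄, g1, g2, g3⟩ := p4 ((x:ℕ):ℤ) 1 hxZodd (by norm_num)
    have hone : (1:ℤ) = s₄*v₄ - r₄*u₄ := by
      have h41 : (4:ℤ)*1 = 4*(s₄*v₄ - r₄*u₄) := by
        linear_combination g1 + s₄*g3 - r₄*g2
      exact mul_left_cancel₀ (by norm_num : (4:ℤ) ≠ 0) h41
    have hmZ₁ : ((x:ℕ):ℤ)^2 + 3 = (p:ℤ)*(4*(m₁:ℤ)) := by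
      rw [hmZ]
      have : (m:ℤ) = 4*(m₁:ℤ) := by exact_mod_cast congrArg (Nat.cast : ℕ → ℤ) hm₁
      rw [this]
    have hq : u₄^2+3*v₄^2 = (p:ℤ)*(m₁:ℤ) := by
      have h16 : (16:ℤ)*(u₄^2+3*v₄^2) = 16*((p:ℤ)*(m₁:ℤ)) := by
        linear_combination 4*hmZ₁ - (((x:ℕ):ℤ)^2+3)*g1 - (((x:ℕ):ℤ)*s₄-3*r₄+4*u₄)*g2 - 3*(((x:ℕ):ℤ)*r₄+s₄+4*v₄)*g3
      exact mul_left_cancel₀ (by norm_num : (16:ℤ) ≠ 0) h16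
    have hdvd1 : (m₁:ℤ) ∣ u₄^2 + 3*v₄^2 := ⟨(p:ℤ), by rw [hq]; ring⟩
    have hVm₁ : Vc m₁ u₄ v₄ := by
      apply triv_Vc
      intro q qq hq3 hqm
      have hq2 : q ≠ 2 := by intro h; subst h; omega
      have hq3' : q ≠ 3 := fun h => h3m₁ (h ▸ hqm)
      have qInt : Prime (q:ℤ) := Nat.prime_iff_prime_int.mp qq
      have hqdvd : (q:ℤ) ∣ u₄^2+3*v₄^2 := (Int.natCast_dvd_natCast.mpr hqm).trans hdvd1
      by_cases hv₄ : (q:ℤ) ∣ v₄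
      · have hu₄ : (q:ℤ) ∣ u₄ := by
          apply qInt.dvd_of_dvd_pow (n := 2)
          have e : u₄^2 = (u₄^2+3*v₄^2) - 3*(v₄*v₄) := by ring
          rw [e]
          exact dvd_sub hqdvd ((hv₄.mul_left v₄).mul_left 3)
        apply not_dvd_one_int qq
        rw [hone]
        exact dvd_sub (hv₄.mul_left s₄) (hu₄.mul_left r₄)
      · exact hq3 (key3 q qq hq2 hq3' u₄ v₄ hqdvd hv₄)
    obtain ⟨s₁, r₁, uu, vv, k1, k2, k3⟩ := ihc m₁ hm₁lt u₄ v₄ hm₁odd h3m₁ hdvd1 hVm₁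
    obtain ⟨c1, c2, c3⟩ := comp g1 g2 g3 k1 k2 k3
    have hm4 : (m:ℤ) = 4*(m₁:ℤ) := by exact_mod_cast congrArg (Nat.cast : ℕ → ℤ) hm₁
    refine ⟨s₄*s₁-3*r₄*r₁, s₄*r₁+r₄*s₁, uu, vv, ?_, ?_, ?_⟩
    · rw [hm4]; exact c1
    · rw [hm4]; linear_combination c2
    · rw [hm4]; linear_combination c3

private lemma core : ∀ n : ℕ, ∀ A B : ℤ, n % 2 = 1 → ¬ (3 ∣ n) → (n:ℤ) ∣ A^2+3*B^2 → Vc n A B →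
    ∃ s r u v : ℤ, (n:ℤ) = s^2+3*r^2 ∧ A*s - 3*B*r = (n:ℤ)*u ∧ A*r + B*s = (n:ℤ)*v := by
  intro n
  induction n using Nat.strong_induction_on with
  | _ n ih =>
    intro A B hodd h3n hdvd hV
    rcases eq_or_ne n 1 with rfl | hn1
    · exact ⟨1, 0, A, B, by norm_num, by push_cast; ring, by push_cast; ring⟩
    have hn0 : n ≠ 0 := by omega
    have pp : n.minFac.Prime := Nat.minFac_prime hn1
    set p := n.minFac with hpdef
    have hpn : p ∣ n := Nat.minFac_dvd n
    have pInt : Prime (p:ℤ) := Nat.prime_iff_prime_int.mp pp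
    have hpne : (p:ℤ) ≠ 0 := by exact_mod_cast pp.pos.ne'
    have hple : p ≤ n := Nat.le_of_dvd (by omega) hpn
    have hp2 : p ≠ 2 := by
      intro h
      rw [h] at hpn
      omega
    have hp3 : p ≠ 3 := fun h => h3n (h ▸ hpn)
    have hpodd : p % 2 = 1 := pp.eq_two_or_odd.resolve_left hp2
    have hpzdvd : (p:ℤ) ∣ A^2+3*B^2 := dvd_trans (Int.natCast_dvd_natCast.mpr hpn) hdvd
    by_cases hsplit : p % 3 = 1
    · -- split case
      obtain ⟨n', hn'⟩ := hpn
      have hn'0 : n' ≠ 0 := fun h => by rw [h, mul_zero] at hn'; exact hn0 hn'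
      have hn'lt : n' < n := by
        have h1 : n' < 2*n' := by omega
        have h2 : 2*n' ≤ p*n' := Nat.mul_le_mul_right _ pp.two_le
        omega
      have hcast : (n:ℤ) = (p:ℤ)*(n':ℤ) := by exact_mod_cast congrArg (Nat.cast : ℕ → ℤ) hn'
      have hodd' : n' % 2 = 1 := by
        have := Nat.odd_mul.mp (Nat.odd_iff.mpr (hn' ▸ hodd))
        exact Nat.odd_iff.mp this.2
      have h3n' : ¬ 3 ∣ n' := fun h => h3n (hn' ▸ Dvd.dvd.mul_left h p)
      obtain ⟨S, R, hp⟩ := rep p pp hsplit (fun m hm => ih m (lt_of_lt_of_le hm hple))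
      have hprod : (p:ℤ) ∣ (A*S - 3*B*R) * (A*S + 3*B*R) := by
        have e : (A*S-3*B*R)*(A*S+3*B*R) = S^2*(A^2+3*B^2) - 3*B^2*(p:ℤ) := by
          linear_combination 3*B^2*hp
        rw [e]
        exact dvd_sub (hpzdvd.mul_left _) (Dvd.intro_left _ rfl)
      have hex : ∃ R' : ℤ, (p:ℤ) = S^2+3*R'^2 ∧ (p:ℤ) ∣ A*S - 3*B*R' := by
        rcases (Prime.dvd_mul pInt).mp hprod with h | h
        · exact ⟨R, hp, h⟩
        · refine ⟨-R, by linear_combination hp, ?_⟩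
          have e : A*S - 3*B*(-R) = A*S + 3*B*R := by ring
          rw [e]; exact h
      obtain ⟨R', hp', hnum⟩ := hex
      have hden : (p:ℤ) ∣ A*R' + B*S := by
        have k1 : (p:ℤ) ∣ S*(A*R'+B*S) := by
          have e : S*(A*R'+B*S) = B*(p:ℤ) + R'*(A*S-3*B*R') := by linear_combination (-B)*hp'
          rw [e]; exact dvd_add (Dvd.intro_left _ rfl) (hnum.mul_left _)
        have k2 : (p:ℤ) ∣ (3*R')*(A*R'+B*S) := by
          have e : (3*R')*(A*R'+B*S) = A*(p:ℤ) - S*(A*S-3*B*R') := by linear_combination (-A)*hp'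
          rw [e]; exact dvd_sub (Dvd.intro_left _ rfl) (hnum.mul_left _)
        rcases (Prime.dvd_mul pInt).mp k1 with hS | hok
        · rcases (Prime.dvd_mul pInt).mp k2 with h3R | hok
          · exfalso
            have hR : (p:ℤ) ∣ R' := by
              rcases (Prime.dvd_mul pInt).mp h3R with h3' | hR
              · exfalso
                have hd3 : (p:ℕ) ∣ 3 := by exact_mod_cast h3'
                exact hp3 ((Nat.prime_dvd_prime_iff_eq pp Nat.prime_three).mp hd3)
              · exact hR
            have hsq : (p:ℤ)*(p:ℤ) ∣ S^2+3*R'^2 := by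
              have e1 : S^2+3*R'^2 = S*S + 3*(R'*R') := by ring
              rw [e1]
              have d1 : (p:ℤ)*(p:ℤ) ∣ S*S := mul_dvd_mul hS hS
              have d2 : (p:ℤ)*(p:ℤ) ∣ 3*(R'*R') := Dvd.dvd.mul_left (mul_dvd_mul hR hR) 3
              exact dvd_add d1 d2
            obtain ⟨w, hw⟩ := hsq
            have hp1 : (p:ℤ) ∣ 1 :=
              ⟨w, mul_left_cancel₀ hpne (by linear_combination hp' + hw)⟩
            have := Int.le_of_dvd one_pos hp1
            have h2' : (2:ℤ) ≤ (p:ℕ) := by exact_mod_cast pp.two_le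
            omega
          · exact hok
        · exact hok
      obtain ⟨u₁, hu₁⟩ := hnum
      obtain ⟨v₁, hv₁⟩ := hden
      have hfac : A^2+3*B^2 = (p:ℤ)*(u₁^2+3*v₁^2) := by
        have key : (p:ℤ)*(A^2+3*B^2) = (p:ℤ)*((p:ℤ)*(u₁^2+3*v₁^2)) := by
          linear_combination (A^2+3*B^2)*hp' + (A*S-3*B*R'+(p:ℤ)*u₁)*hu₁ + 3*(A*R'+B*S+(p:ℤ)*v₁)*hv₁
        exact mul_left_cancel₀ hpne key
      have hdvd' : (n':ℤ) ∣ u₁^2+3*v₁^2 := by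
        obtain ⟨t, ht⟩ := hdvd
        refine ⟨t, ?_⟩
        apply mul_left_cancel₀ hpne
        rw [← hfac, ht, hcast]
        ring
      have hV' : Vc n' u₁ v₁ := by
        intro q qq hq3
        have hqp : q ≠ p := fun h => hq3 (h ▸ hsplit)
        obtain ⟨hev, hdA, hdB⟩ := hV q qq hq3
        have hfq : n.factorization q = n'.factorization q := by
          rw [hn', Nat.factorization_mul pp.pos.ne' hn'0, Finsupp.add_apply,
            pp.factorization, Finsupp.single_eq_of_ne' (fun h => hqp h.symm)]
          omega
        rw [← hfq]
        have hcop : IsCoprime ((q:ℤ)^(n.factorization q / 2)) ((p:ℤ)) := by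
          have hc : Nat.Coprime q p := (Nat.coprime_primes qq pp).mpr hqp
          exact (Nat.isCoprime_iff_coprime.mpr hc).pow_left
        refine ⟨hev, ?_, ?_⟩
        · have hd : (q:ℤ)^(n.factorization q / 2) ∣ (p:ℤ)*u₁ := by
            rw [← hu₁]
            exact dvd_sub (hdA.mul_right S) ((hdB.mul_left 3).mul_right R')
          exact hcop.dvd_of_dvd_mul_left hd
        · have hd : (q:ℤ)^(n.factorization q / 2) ∣ (p:ℤ)*v₁ := by
            rw [← hv₁]
            exact dvd_add (hdA.mul_right R') (hdB.mul_right S)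
          exact hcop.dvd_of_dvd_mul_left hd
      obtain ⟨s₂, r₂, uu, vv, k1, k2, k3⟩ := ih n' hn'lt u₁ v₁ hodd' h3n' hdvd' hV'
      obtain ⟨c1, c2, c3⟩ := comp hp' hu₁ hv₁ k1 k2 k3
      exact ⟨S*s₂-3*R'*r₂, S*r₂+R'*s₂, uu, vv, by rw [hcast]; exact c1,
        by rw [hcast]; exact c2, by rw [hcast]; exact c3⟩
    · -- inert case
      obtain ⟨hev, hdA, hdB⟩ := hV p pp hsplit
      have hvpos : 0 < n.factorization p := pp.factorization_pos_of_dvd hn0 hpn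
      have hv2 : 2 ≤ n.factorization p := by
        rcases hev with ⟨k, hk⟩; omega
      have hk1 : 1 ≤ n.factorization p / 2 := by omega
      have hpA : (p:ℤ) ∣ A := dvd_trans (dvd_pow_self _ (by omega : n.factorization p / 2 ≠ 0)) hdA
      have hpB : (p:ℤ) ∣ B := dvd_trans (dvd_pow_self _ (by omega : n.factorization p / 2 ≠ 0)) hdB
      obtain ⟨A', rfl⟩ := hpA
      obtain ⟨B', rfl⟩ := hpB
      have hp2n : p^2 ∣ n := dvd_trans (pow_dvd_pow p hv2) (Nat.ordProj_dvd n p)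
      obtain ⟨n'', hn2⟩ := hp2n
      have hn''0 : n'' ≠ 0 := fun h => by rw [h, mul_zero] at hn2; exact hn0 hn2
      have hn''lt : n'' < n := sub_lt_self' pp hn2 hn''0
      have hcast : (n:ℤ) = (p:ℤ)^2*(n'':ℤ) := by exact_mod_cast congrArg (Nat.cast : ℕ → ℤ) hn2
      have hodd'' : n'' % 2 = 1 := by
        have := Nat.odd_mul.mp (Nat.odd_iff.mpr (hn2 ▸ hodd))
        exact Nat.odd_iff.mp this.2
      have h3n'' : ¬ 3 ∣ n'' := fun h => h3n (hn2 ▸ Dvd.dvd.mul_left h (p^2))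
      have hdvd'' : (n'':ℤ) ∣ A'^2+3*B'^2 := by
        obtain ⟨t, ht⟩ := hdvd
        refine ⟨t, ?_⟩
        apply mul_left_cancel₀ (pow_ne_zero 2 hpne)
        linear_combination ht + t*hcast
      have hV'' : Vc n'' A' B' := by
        intro q qq hq3
        obtain ⟨hev', hdA', hdB'⟩ := hV q qq hq3
        by_cases hqp : q = p
        · subst hqp
          obtain ⟨hfp, _⟩ := fact_split qq hn2 hn''0
          rw [hfp] at hev' hdA' hdB'
          have hevn : Even (n''.factorization p) := by
            rcases hev' with ⟨k, hk⟩; exact ⟨k-1, by omega⟩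
          have hrel : (n''.factorization p + 2) / 2 = n''.factorization p / 2 + 1 := by omega
          rw [hrel] at hdA' hdB'
          refine ⟨hevn, ?_, ?_⟩
          · obtain ⟨w, hw⟩ := hdA'
            rw [pow_succ'] at hw
            refine ⟨w, mul_left_cancel₀ hpne ?_⟩
            rw [← mul_assoc]
            exact hw
          · obtain ⟨w, hw⟩ := hdB'
            rw [pow_succ'] at hw
            refine ⟨w, mul_left_cancel₀ hpne ?_⟩
            rw [← mul_assoc]
            exact hw
        · obtain ⟨_, hfq⟩ := fact_split pp hn2 hn''0
          rw [← hfq q hqp]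
          have hcop : IsCoprime ((q:ℤ)^(n.factorization q / 2)) ((p:ℤ)) := by
            have hc : Nat.Coprime q p := (Nat.coprime_primes qq pp).mpr hqp
            exact (Nat.isCoprime_iff_coprime.mpr hc).pow_left
          exact ⟨hev', hcop.dvd_of_dvd_mul_left hdA', hcop.dvd_of_dvd_mul_left hdB'⟩
      obtain ⟨s₂, r₂, uu, vv, k1, k2, k3⟩ := ih n'' hn''lt A' B' hodd'' h3n'' hdvd'' hV''
      have g1 : ((p:ℤ)^2) = (p:ℤ)^2 + 3*(0:ℤ)^2 := by ring
      have g2 : ((p:ℤ)*A')*(p:ℤ) - 3*((p:ℤ)*B')*0 = (p:ℤ)^2*A' := by ring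
      have g3 : ((p:ℤ)*A')*0 + ((p:ℤ)*B')*(p:ℤ) = (p:ℤ)^2*B' := by ring
      obtain ⟨c1, c2, c3⟩ := comp g1 g2 g3 k1 k2 k3
      exact ⟨(p:ℤ)*s₂-3*0*r₂, (p:ℤ)*r₂+0*s₂, uu, vv, by rw [hcast]; exact c1,
        by rw [hcast]; exact c2, by rw [hcast]; exact c3⟩

private lemma mod8aux : ∀ k x y m : ZMod 8, (2*k)^2 + x^2 + y^2 ≠ 3*(2*m+1)^2 := by decide

private lemma mod3aux : ∀ x y z w : ZMod 3, x^2+y^2+z^2 = 3*w^2 →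
    (x = 0 ∧ y = 0 ∧ z = 0) ∨ (x ≠ 0 ∧ y ≠ 0 ∧ z ≠ 0) := by decide

private lemma mod3aux2 : ∀ x y : ZMod 3, x ≠ 0 → y ≠ 0 → x^2+y^2 ≠ 0 := by decide

private lemma cop4 {q : ℕ} (qq : q.Prime) (hq2 : q ≠ 2) (k : ℕ) :
    IsCoprime ((q:ℤ)^k) (4:ℤ) := by
  have hc : Nat.Coprime q 2 := (Nat.coprime_primes qq Nat.prime_two).mpr hq2
  have hcz : IsCoprime (q:ℤ) (2:ℤ) := Nat.isCoprime_iff_coprime.mpr hc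
  have h4 : (4:ℤ) = 2^2 := by norm_num
  rw [h4]
  exact IsCoprime.pow hcz

/-- Existence of a suitable solution `(r, s)` of `2q = s² + 3r²` with
`As − 3Br = 2qu` and `Ar + Bs = −2qv`, where `q = a² + b²`, `A = ac`, `B = bd`. -/
theorem exists_r_s_u_v (a b c d : ℤ) (habc : a ^ 2 + b ^ 2 + c ^ 2 = 3 * d ^ 2)
    (hd : Odd d) (hgcd : Int.gcd (Int.gcd a b) c = 1) :
    ∃ r s u v : ℤ,
      2 * (a ^ 2 + b ^ 2) = s ^ 2 + 3 * r ^ 2 ∧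
      (a * c) * s - 3 * (b * d) * r = 2 * (a ^ 2 + b ^ 2) * u ∧
      (a * c) * r + (b * d) * s = -(2 * (a ^ 2 + b ^ 2) * v) := by
  obtain ⟨m, hm⟩ := hd
  have h8 : ((a:ZMod 8))^2 + (b:ZMod 8)^2 + (c:ZMod 8)^2 = 3*((d:ZMod 8))^2 := by
    have := congrArg (fun z : ℤ => (z : ZMod 8)) habc
    push_cast at this
    exact this
  have hd8 : (d:ZMod 8) = 2*(m:ZMod 8)+1 := by rw [hm]; push_cast; ring
  -- a, b, c are odd
  have ha : Odd a := by
    rcases Int.even_or_odd a with ⟨k, hk⟩ | h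
    · exfalso
      apply mod8aux (k:ZMod 8) (b:ZMod 8) (c:ZMod 8) (m:ZMod 8)
      have ha8 : (a:ZMod 8) = 2*(k:ZMod 8) := by rw [hk]; push_cast; ring
      rw [← ha8, ← hd8]
      exact h8
    · exact h
  have hb : Odd b := by
    rcases Int.even_or_odd b with ⟨k, hk⟩ | h
    · exfalso
      apply mod8aux (k:ZMod 8) (a:ZMod 8) (c:ZMod 8) (m:ZMod 8)
      have hb8 : (b:ZMod 8) = 2*(k:ZMod 8) := by rw [hk]; push_cast; ring
      rw [← hb8, ← hd8]
      linear_combination h8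
    · exact h
  have hc : Odd c := by
    rcases Int.even_or_odd c with ⟨k, hk⟩ | h
    · exfalso
      apply mod8aux (k:ZMod 8) (a:ZMod 8) (b:ZMod 8) (m:ZMod 8)
      have hc8 : (c:ZMod 8) = 2*(k:ZMod 8) := by rw [hk]; push_cast; ring
      rw [← hc8, ← hd8]
      linear_combination h8
    · exact h
  -- 3 does not divide a^2+b^2
  have h3q : ¬ ((3:ℤ) ∣ a^2+b^2) := by
    have h3abc : ¬((3:ℤ) ∣ a ∧ (3:ℤ) ∣ b ∧ (3:ℤ) ∣ c) := by
      rintro ⟨h1, h2, h3c⟩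
      have hg1 : (3:ℤ) ∣ (Int.gcd a b : ℤ) := Int.dvd_coe_gcd h1 h2
      have hg2 : (3:ℤ) ∣ (Int.gcd (Int.gcd a b) c : ℤ) := Int.dvd_coe_gcd hg1 h3c
      rw [hgcd] at hg2
      norm_num at hg2
    have h3eq : ((a:ZMod 3))^2+(b:ZMod 3)^2+(c:ZMod 3)^2 = 3*((d:ZMod 3))^2 := by
      have := congrArg (fun z : ℤ => (z : ZMod 3)) habc
      push_cast at this
      exact this
    rcases mod3aux _ _ _ _ h3eq with ⟨ha0, hb0, hc0⟩ | ⟨ha0, hb0, hc0⟩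
    · exact absurd ⟨(ZMod.intCast_zmod_eq_zero_iff_dvd a 3).mp ha0,
        (ZMod.intCast_zmod_eq_zero_iff_dvd b 3).mp hb0,
        (ZMod.intCast_zmod_eq_zero_iff_dvd c 3).mp hc0⟩ h3abc
    · intro hdq
      apply mod3aux2 _ _ ha0 hb0
      have h0 : ((a^2+b^2 : ℤ) : ZMod 3) = 0 := (ZMod.intCast_zmod_eq_zero_iff_dvd _ 3).mpr hdq
      push_cast at h0
      exact h0
  -- construct n0 with 2*n0 = a^2+b^2
  obtain ⟨i, hi⟩ := ha
  obtain ⟨j, hj⟩ := hb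
  obtain ⟨l, hl⟩ := hc
  set K : ℤ := i^2+i+j^2+j with hK
  have hq4 : a^2+b^2 = 4*K+2 := by rw [hi, hj, hK]; ring
  have hKpos : 0 ≤ K := by
    have h1 : (0:ℤ) ≤ (2*i+1)^2 + (2*j+1)^2 := by positivity
    have h2 : (2*i+1)^2 + (2*j+1)^2 = 4*K+2 := by rw [hK]; ring
    omega
  set n0 : ℕ := (2*K+1).toNat with hn0def
  have hn0cast : (n0:ℤ) = 2*K+1 := Int.toNat_of_nonneg (by omega)
  have hq2n0 : (n0:ℤ)*2 = a^2+b^2 := by rw [hn0cast, hq4]; ring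
  have hn0odd : n0 % 2 = 1 := by omega
  have hn0ne : n0 ≠ 0 := by omega
  have h3n0 : ¬ (3 ∣ n0) := by
    intro h3
    apply h3q
    have : (3:ℤ) ∣ (n0:ℤ) := by exact_mod_cast Int.natCast_dvd_natCast.mpr h3
    rw [← hq2n0]
    exact this.mul_right 2
  obtain ⟨M, hM⟩ : ∃ M : ℤ, b^2+c^2 = 2*M := ⟨2*(j^2+j+l^2+l)+1, by rw [hj, hl]; ring⟩
  -- A B odd
  set A : ℤ := a*c with hA
  set B : ℤ := b*d with hB
  have hAodd : A % 2 = 1 := by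
    have : A = (2*i+1)*(2*l+1) := by rw [hA, hi, hl]
    rw [this]
    have e : (2*i+1)*(2*l+1) = 2*(2*i*l+i+l)+1 := by ring
    rw [e]
    omega
  have hBodd : B % 2 = 1 := by
    have : B = (2*j+1)*(2*m+1) := by rw [hB, hj, hm]
    rw [this]
    have e : (2*j+1)*(2*m+1) = 2*(2*j*m+j+m)+1 := by ring
    rw [e]
    omega
  obtain ⟨s₄, r₄, A₁, B₁, g1, g2, g3⟩ := p4 A B hAodd hBodd
  have hAB : A^2+3*B^2 = (a^2+b^2)*(b^2+c^2) := by
    rw [hA, hB]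
    linear_combination (-(b^2))*habc
  have h4AB : (4:ℤ)*(A₁^2+3*B₁^2) = (A^2+3*B^2) := by
    have h16 : (16:ℤ)*(A₁^2+3*B₁^2) = 4*(A^2+3*B^2) := by
      linear_combination (-(A*s₄-3*B*r₄+4*A₁))*g2 - 3*(A*r₄+B*s₄+4*B₁)*g3 - (A^2+3*B^2)*g1
    linarith
  have hprod : A₁^2+3*B₁^2 = (n0:ℤ)*M := by
    have h4 : (4:ℤ)*(A₁^2+3*B₁^2) = 4*((n0:ℤ)*M) := by
      rw [h4AB, hAB, ← hq2n0, hM]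
      ring
    linarith
  have hdvdmain : (n0:ℤ) ∣ A₁^2+3*B₁^2 := ⟨M, hprod⟩
  -- initial Vc
  have hVinit : Vc n0 A₁ B₁ := by
    intro q qq hq3
    by_cases hqn : q ∣ n0
    case neg =>
      rw [Nat.factorization_eq_zero_of_not_dvd hqn]
      simp
    case pos =>
      have hq2 : q ≠ 2 := by
        intro h
        subst h
        omega
      have hq3' : q ≠ 3 := fun h => h3n0 (h ▸ hqn)
      have hqodd : q % 2 = 1 := qq.eq_two_or_odd.resolve_left hq2
      -- relate factorizations of n0 and N = 2*n0
      have hfeq : (2*n0).factorization q = n0.factorization q := by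
        rw [Nat.factorization_mul (by norm_num) hn0ne, Finsupp.add_apply,
          Nat.Prime.factorization Nat.prime_two,
          Finsupp.single_eq_of_ne' (fun h => hq2 h.symm)]
        omega
      have hNcast : ((2*n0 : ℕ):ℤ) = a^2+b^2 := by push_cast; linarith [hq2n0]
      -- q^k divides A and B
      have hABdvd : (q:ℤ)^(n0.factorization q / 2) ∣ A ∧ (q:ℤ)^(n0.factorization q / 2) ∣ B ∧
          Even (n0.factorization q) := by
        rcases (by omega : q % 4 = 1 ∨ q % 4 = 3) with h4 | h4
        · have hN2 : ((2*n0 : ℕ):ℤ) = 3*d^2 - c^2 := by rw [hNcast]; linear_combination habc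
          obtain ⟨hev, hdc, hdd⟩ := L2 q qq hq2 hq3' h4 hq3 (2*n0) c d hN2
          rw [hfeq] at hev hdc hdd
          exact ⟨hdc.mul_left a, hdd.mul_left b, hev⟩
        · obtain ⟨hev, hda, hdb⟩ := L1 q qq h4 (2*n0) a b hNcast
          rw [hfeq] at hev hda hdb
          exact ⟨hda.mul_right c, hdb.mul_right d, hev⟩
      obtain ⟨hdA, hdB, hev⟩ := hABdvd
      refine ⟨hev, ?_, ?_⟩
      · have h4A : (q:ℤ)^(n0.factorization q / 2) ∣ 4*A₁ := by
          rw [← g2]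
          exact dvd_sub (hdA.mul_right s₄) ((hdB.mul_left 3).mul_right r₄)
        exact (cop4 qq hq2 _).dvd_of_dvd_mul_left h4A
      · have h4B : (q:ℤ)^(n0.factorization q / 2) ∣ 4*B₁ := by
          rw [← g3]
          exact dvd_add (hdA.mul_right r₄) (hdB.mul_right s₄)
        exact (cop4 qq hq2 _).dvd_of_dvd_mul_left h4B
  obtain ⟨s₁, r₁, u₁, v₁, k1, k2, k3⟩ := core n0 A₁ B₁ hn0odd h3n0 hdvdmain hVinit
  obtain ⟨c1, c2, c3⟩ := comp g1 g2 g3 k1 k2 k3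
  have h2q : 2*(a^2+b^2) = (4:ℤ)*(n0:ℤ) := by linarith [hq2n0]
  refine ⟨s₄*r₁+r₄*s₁, s₄*s₁-3*r₄*r₁, u₁, -v₁, ?_, ?_, ?_⟩
  · rw [h2q]; exact c1
  · rw [h2q]; rw [hA, hB] at c2; exact c2
  · rw [hA, hB] at c3
    have e : -(2*(a^2+b^2) * -v₁) = 2*(a^2+b^2)*v₁ := by ring
    rw [e, h2q]
    exact c3
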